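/- Let α be a type, D a finite nonempty subset of α (the ground set), f an ordered-submodular sequence function on α with f(empty list) ≥ 0, and k a natural number. Suppose A is a list of length k that is greedy for f over D, i.e. every entry of A lies in D and for every i with 1 ≤ i ≤ k and every x ∈ D, f(A.take(i−1) ++ [x]) ≤ f(A.take i). Then for every list S of length k all of whose entries lie in D, f(S) ≤ 2·f(A). In other words, the greedy algorithm is a 2-approximation for maximizing a nonnegative ordered-submodular function over lists of length k. -/

import Mathlib

/-- A sequence function `f : List α → ℝ` is **ordered-submodular** if for all lists
`A, B` and elements `s, s̄`:
`f(A ++ [s]) − f(A) ≥ f(A ++ [s] ++ B) − f(A ++ [s̄] ++ B)`. -/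
def OrderedSubmodular {α : Type*} (f : List α → ℝ) : Prop :=
  ∀ (A B : List α) (s sbar : α),
    f (A ++ [s] ++ B) - f (A ++ [sbar] ++ B) ≤ f (A ++ [s]) - f A

/-- the greedy algorithm is a 2-approximation for maximizing a
nonnegative ordered-submodular function over lists of length `k` with entries
from a finite nonempty ground set `D`. -/
theorem greedy_two_approximation {α : Type*} (D : Finset α) (hD : D.Nonempty)
    (f : List α → ℝ) (hf : OrderedSubmodular f) (hf0 : 0 ≤ f [])
    (k : ℕ) (A : List α) (hAlen : A.length = k) (hAmem : ∀ a ∈ A, a ∈ D)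
    (hgreedy : ∀ i : ℕ, 1 ≤ i → i ≤ k → ∀ x ∈ D,
      f (A.take (i - 1) ++ [x]) ≤ f (A.take i)) :
    ∀ S : List α, S.length = k → (∀ a ∈ S, a ∈ D) → f S ≤ 2 * f A := by
  intro S hSlen hSmem
  have key : ∀ j : ℕ, j ≤ k →
      f S ≤ f (A.take j ++ S.drop j) + (f (A.take j) - f []) := by
    intro j
    induction j with
    | zero => intro _; simp
    | succ j ih =>
      intro hj
      have hj' : j ≤ k := Nat.le_of_succ_le hj
      have hjA : j < A.length := by omega
      have hjS : j < S.length := by omega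
      have hdrop : S.drop j = S[j] :: S.drop (j+1) := List.drop_eq_getElem_cons hjS
      have htake : A.take (j+1) = A.take j ++ [A[j]] := by
        rw [List.take_succ]; simp [List.getElem?_eq_getElem hjA]
      have hsub := hf (A.take j) (S.drop (j+1)) S[j] A[j]
      have hgr := hgreedy (j+1) (by omega) hj S[j] (hSmem _ (List.getElem_mem hjS))
      simp only [Nat.add_sub_cancel] at hgr
      have e1 : f (A.take j ++ S.drop j) = f (A.take j ++ [S[j]] ++ S.drop (j+1)) := by
        rw [hdrop]; simp
      have e2 : f (A.take (j+1) ++ S.drop (j+1))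
          = f (A.take j ++ [A[j]] ++ S.drop (j+1)) := by rw [htake]
      have e3 : f (A.take (j+1)) = f (A.take j ++ [A[j]]) := by rw [htake]
      have hih := ih hj'
      rw [e3] at hgr
      linarith [hih, hsub, hgr, e1, e2]
  have hk := key k le_rfl
  have h1 : A.take k = A := by rw [← hAlen]; exact List.take_length (l := A)
  have h2 : S.drop k = [] := by rw [← hSlen]; exact List.drop_length (l := S)
  rw [h1, h2, List.append_nil] at hk
  linarith
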